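/- For any positive integer n and commutative ring elements (or field elements) x_1,...,x_n that are invertible, the n×n determinant det(x_h^{t-1/2} + x_h^{1/2-t})_{1≤h,t≤n} (interpreted after choosing square roots y_h with y_h^2 = x_h, i.e. det(y_h^{2t-1} + y_h^{1-2t})) equals (x_1x_2···x_n)^{-n+1/2} · ∏_{1≤h<t≤n}(x_h-x_t)(1-x_h x_t) · ∏_{h=1}^n (x_h+1), i.e. det(y_h^{2t-1}+y_h^{1-2t})_{1≤h,t≤n} = (y_1···y_n)^{-2n+1} ∏_{1≤h<t≤n}(y_h^2-y_t^2)(1-y_h^2y_t^2) ∏_{h=1}^n (y_h^2+1). -/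

import Mathlib

open Polynomial Finset

/-- Auxiliary polynomial family: `myQ t` is monic of degree `t` and satisfies
`(y + y⁻¹) * (myQ t).eval ((y+y⁻¹)^2) = y^(2t+1) + y⁻¹^(2t+1)`. -/
noncomputable def myQ (F : Type*) [Field F] : ℕ → Polynomial F
  | 0 => 1
  | 1 => Polynomial.X - Polynomial.C 3
  | (t + 2) => (Polynomial.X - Polynomial.C 2) * myQ F (t + 1) - myQ F t

lemma myQ_monic_natDegree (F : Type*) [Field F] :
    ∀ t, ((myQ F t).Monic ∧ (myQ F t).natDegree = t) ∧
      ((myQ F (t + 1)).Monic ∧ (myQ F (t + 1)).natDegree = t + 1) := by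
  intro t
  induction t with
  | zero =>
    refine ⟨⟨?_, ?_⟩, ?_, ?_⟩ <;> simp [myQ, monic_one, monic_X_sub_C]
  | succ t ih =>
    obtain ⟨⟨hm0, hd0⟩, hm1, hd1⟩ := ih
    refine ⟨⟨hm1, hd1⟩, ?_⟩
    have hmul : ((Polynomial.X - Polynomial.C (2 : F)) * myQ F (t + 1)).Monic :=
      (monic_X_sub_C 2).mul hm1
    have hdmul : ((Polynomial.X - Polynomial.C (2 : F)) * myQ F (t + 1)).natDegree = t + 2 := by
      rw [(monic_X_sub_C (2 : F)).natDegree_mul hm1, natDegree_X_sub_C, hd1]; omega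
    have hlt : (myQ F t).natDegree <
        ((Polynomial.X - Polynomial.C (2 : F)) * myQ F (t + 1)).natDegree := by
      rw [hdmul, hd0]; omega
    constructor
    · show ((Polynomial.X - Polynomial.C 2) * myQ F (t + 1) - myQ F t).Monic
      exact hmul.sub_of_left (Polynomial.degree_lt_degree hlt)
    · show ((Polynomial.X - Polynomial.C 2) * myQ F (t + 1) - myQ F t).natDegree = t + 2
      rw [Polynomial.natDegree_sub_eq_left_of_natDegree_lt hlt, hdmul]

lemma myQ_eval (F : Type*) [Field F] (y : F) (hy : y ≠ 0) :
    ∀ t, ((y + y⁻¹) * (myQ F t).eval ((y + y⁻¹) ^ 2) = y ^ (2 * t + 1) + y⁻¹ ^ (2 * t + 1)) ∧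
      ((y + y⁻¹) * (myQ F (t + 1)).eval ((y + y⁻¹) ^ 2)
        = y ^ (2 * (t + 1) + 1) + y⁻¹ ^ (2 * (t + 1) + 1)) := by
  intro t
  induction t with
  | zero =>
    constructor
    · simp [myQ]
    · have h1 : myQ F 1 = Polynomial.X - Polynomial.C 3 := rfl
      rw [h1]
      simp only [eval_sub, eval_X, eval_C]
      field_simp
      rw [div_pow, one_pow, mul_add, mul_one_div_cancel (pow_ne_zero _ hy)]
      ring
  | succ t ih =>
    obtain ⟨h0, h1⟩ := ih
    refine ⟨h1, ?_⟩
    show (y + y⁻¹) * (((Polynomial.X - Polynomial.C 2) * myQ F (t + 1) - myQ F t).eval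
      ((y + y⁻¹) ^ 2)) = _
    simp only [eval_sub, eval_mul, eval_X, eval_C]
    have key : (y + y⁻¹) * (((y + y⁻¹) ^ 2 - 2) * (myQ F (t + 1)).eval ((y + y⁻¹) ^ 2)
        - (myQ F t).eval ((y + y⁻¹) ^ 2))
        = ((y + y⁻¹) ^ 2 - 2) * ((y + y⁻¹) * (myQ F (t + 1)).eval ((y + y⁻¹) ^ 2))
          - ((y + y⁻¹) * (myQ F t).eval ((y + y⁻¹) ^ 2)) := by ring
    rw [key, h0, h1]
    have e1 : 2 * (t + 1) + 1 = 2 * t + 1 + 2 := by ring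
    have e2 : 2 * (t + 2) + 1 = 2 * t + 1 + 4 := by ring
    have q1 : y ^ (2 * (t + 1) + 1) = y ^ (2 * t + 1) * y ^ 2 := by rw [e1, pow_add]
    have q2 : y⁻¹ ^ (2 * (t + 1) + 1) = y⁻¹ ^ (2 * t + 1) * y⁻¹ ^ 2 := by rw [e1, pow_add]
    have q3 : y ^ (2 * (t + 2) + 1) = y ^ (2 * t + 1) * y ^ 4 := by rw [e2, pow_add]
    have q4 : y⁻¹ ^ (2 * (t + 2) + 1) = y⁻¹ ^ (2 * t + 1) * y⁻¹ ^ 4 := by rw [e2, pow_add]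
    rw [q1, q2, q3, q4]
    generalize y ^ (2 * t + 1) = a
    generalize y⁻¹ ^ (2 * t + 1) = b
    field_simp
    ring

/-- Equation (ortho1): even-orthogonal-type Vandermonde determinant evaluation. -/
theorem stmt_0 {F : Type*} [Field F] (n : ℕ) (hn : 0 < n) (y : Fin n → F)
    (hy : ∀ h, y h ≠ 0) :
    Matrix.det (Matrix.of fun h t : Fin n =>
        y h ^ ((2 * (t : ℕ) + 1 : ℤ)) + y h ^ (-(2 * (t : ℕ) + 1 : ℤ))) =
      (∏ h, y h) ^ ((1 - 2 * (n : ℤ))) *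
        (∏ t : Fin n, ∏ h ∈ Finset.Iio t,
          ((y h ^ 2 - y t ^ 2) * (1 - y h ^ 2 * y t ^ 2))) *
        ∏ h, (y h ^ 2 + 1) := by
  set u : Fin n → F := fun h => y h + (y h)⁻¹ with hu
  -- Step 1: rewrite entries using the polynomial family
  have hentry : (Matrix.of fun h t : Fin n =>
      y h ^ ((2 * (t : ℕ) + 1 : ℤ)) + y h ^ (-(2 * (t : ℕ) + 1 : ℤ)))
      = Matrix.of fun h t : Fin n => u h * (myQ F t).eval (u h ^ 2) := by
    ext h t
    simp only [Matrix.of_apply]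
    rw [show ((2 * ((t : Fin n) : ℕ) + 1 : ℤ)) = ((2 * ((t : Fin n) : ℕ) + 1 : ℕ) : ℤ) by
        push_cast; ring, zpow_neg, zpow_natCast, ← inv_pow,
      ← (myQ_eval F (y h) (hy h) (t : ℕ)).1]
  have hdet2 : (Matrix.det fun h t : Fin n => (myQ F (t : ℕ)).eval (u h ^ 2))
      = (Matrix.vandermonde fun h => u h ^ 2).det := by
    exact (Matrix.det_eval_matrixOfPolynomials_eq_det_vandermonde (fun h => u h ^ 2)
      (fun t : Fin n => myQ F t)
      (fun t => by simpa using ((myQ_monic_natDegree F (t : ℕ)).1).2)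
      (fun t => ((myQ_monic_natDegree F (t : ℕ)).1).1)).symm
  rw [hentry, Matrix.det_mul_column u (fun h t : Fin n => (myQ F (t : ℕ)).eval (u h ^ 2)), hdet2, Matrix.det_vandermonde]
  have hq : (∏ h, y h) ≠ 0 := Finset.prod_ne_zero_iff.mpr fun h _ => hy h
  have swap1 : (∏ i : Fin n, ∏ j ∈ Finset.Ioi i, (u j ^ 2 - u i ^ 2))
      = ∏ t : Fin n, ∏ h ∈ Finset.Iio t, (u t ^ 2 - u h ^ 2) :=
    Finset.prod_comm' (by simp)
  have pairstep : ∀ t : Fin n, ∀ h ∈ Finset.Iio t, u t ^ 2 - u h ^ 2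
      = ((y h ^ 2 - y t ^ 2) * (1 - y h ^ 2 * y t ^ 2)) * ((y h)⁻¹ ^ 2 * (y t)⁻¹ ^ 2) := by
    intro t h _
    simp only [hu]
    field_simp [hy t, hy h]
    ring
  have split2 : (∏ t : Fin n, ∏ h ∈ Finset.Iio t, (u t ^ 2 - u h ^ 2))
      = (∏ t : Fin n, ∏ h ∈ Finset.Iio t,
          ((y h ^ 2 - y t ^ 2) * (1 - y h ^ 2 * y t ^ 2))) *
        (∏ t : Fin n, ∏ h ∈ Finset.Iio t, ((y h)⁻¹ ^ 2 * (y t)⁻¹ ^ 2)) := by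
    rw [← Finset.prod_mul_distrib]
    refine Finset.prod_congr rfl fun t _ => ?_
    rw [← Finset.prod_mul_distrib]
    exact Finset.prod_congr rfl (pairstep t)
  have hC : (∏ t : Fin n, ∏ h ∈ Finset.Iio t, ((y h)⁻¹ ^ 2 * (y t)⁻¹ ^ 2))
      = ((∏ h, y h)⁻¹) ^ (2 * (n - 1)) := by
    have step1 : (∏ t : Fin n, ∏ h ∈ Finset.Iio t, ((y h)⁻¹ ^ 2 * (y t)⁻¹ ^ 2))
        = (∏ t : Fin n, ∏ h ∈ Finset.Iio t, (y h)⁻¹ ^ 2) *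
          (∏ t : Fin n, ((y t)⁻¹ ^ 2) ^ (t : ℕ)) := by
      rw [← Finset.prod_mul_distrib]
      refine Finset.prod_congr rfl fun t _ => ?_
      rw [Finset.prod_mul_distrib, Finset.prod_const, Fin.card_Iio]
    have step2 : (∏ t : Fin n, ∏ h ∈ Finset.Iio t, (y h)⁻¹ ^ 2)
        = ∏ h : Fin n, ((y h)⁻¹ ^ 2) ^ (n - 1 - (h : ℕ)) := by
      rw [Finset.prod_comm' (s' := fun h => Finset.Ioi h) (t' := Finset.univ) (by simp)]
      exact Finset.prod_congr rfl fun h _ => by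
        rw [Finset.prod_const, Fin.card_Ioi]
    rw [step1, step2, ← Finset.prod_mul_distrib]
    have step3 : ∀ h : Fin n, ((y h)⁻¹ ^ 2) ^ (n - 1 - (h : ℕ)) * ((y h)⁻¹ ^ 2) ^ (h : ℕ)
        = ((y h)⁻¹) ^ (2 * (n - 1)) := by
      intro h
      rw [← pow_add, ← pow_mul]
      congr 1
      have := h.isLt
      omega
    rw [Finset.prod_congr rfl fun h _ => step3 h, Finset.prod_pow, Finset.prod_inv_distrib]
  have husplit : (∏ h, u h) = (∏ h, (y h ^ 2 + 1)) * (∏ h, y h)⁻¹ := by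
    rw [← Finset.prod_inv_distrib, ← Finset.prod_mul_distrib]
    refine Finset.prod_congr rfl fun h _ => ?_
    simp only [hu]
    field_simp [hy h]
  have hzpow : (∏ h, y h) ^ (1 - 2 * (n : ℤ))
      = (∏ h, y h)⁻¹ * ((∏ h, y h)⁻¹) ^ (2 * (n - 1)) := by
    rw [show (1 - 2 * (n : ℤ)) = -((2 * n - 1 : ℕ) : ℤ) by omega,
      zpow_neg, zpow_natCast, show 2 * n - 1 = 1 + 2 * (n - 1) by omega,
      pow_add, pow_one, mul_inv, ← inv_pow]
  rw [swap1, split2, hC, husplit, hzpow]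
  ring
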